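/- Let ε₁, ε₂, ε₃, ε₄ be roots of unity in ℂ with ε₁ + ε₂ + ε₃ + ε₄ = 0. Then, after a suitable relabelling, ε₂ = -ε₁ and ε₄ = -ε₃. -/
import Mathlib


theorem four_roots_of_unity_sum_zero (ε : Fin 4 → ℂ)
    (h : ∀ i, ∃ m : ℕ, 0 < m ∧ ε i ^ m = 1) (hsum : ∑ i, ε i = 0) :
    ∃ σ : Equiv.Perm (Fin 4), ε (σ 1) = -ε (σ 0) ∧ ε (σ 3) = -ε (σ 2) := by
  have hnorm : ∀ i, ‖ε i‖ = 1 := by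
    intro i
    obtain ⟨m, hm, hε⟩ := h i
    have h1 : ‖ε i‖ ^ m = 1 ^ m := by
      rw [← norm_pow, hε, norm_one, one_pow]
    exact (pow_left_inj₀ (norm_nonneg _) zero_le_one hm.ne').mp h1
  have hne : ∀ i, ε i ≠ 0 := fun i h0 => by simpa [h0] using hnorm i
  have hc : ∀ i, (ε i)⁻¹ = (starRingEnd ℂ) (ε i) := fun i =>
    Complex.inv_eq_conj (hnorm i)
  rw [Fin.sum_univ_four] at hsum
  have hs2 : (ε 0)⁻¹ + (ε 1)⁻¹ + (ε 2)⁻¹ + (ε 3)⁻¹ = 0 := by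
    have := congrArg (starRingEnd ℂ) hsum
    simp only [map_add, map_zero] at this
    rw [hc 0, hc 1, hc 2, hc 3]
    exact this
  have key : (ε 0 + ε 1) * (ε 0 + ε 2) * (ε 0 + ε 3) = 0 := by
    field_simp [hne 0, hne 1, hne 2, hne 3] at hs2
    linear_combination hs2 + (ε 0) ^ 2 * hsum
  rcases mul_eq_zero.mp key with key' | h03
  · rcases mul_eq_zero.mp key' with h01 | h02
    · refine ⟨1, ?_, ?_⟩
      · simpa using eq_neg_of_add_eq_zero_right h01
      · simp only [Equiv.Perm.one_apply]
        linear_combination hsum - h01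
    · refine ⟨Equiv.swap 1 2, ?_, ?_⟩
      · rw [show (Equiv.swap 1 2 : Equiv.Perm (Fin 4)) 1 = 2 by decide,
          show (Equiv.swap 1 2 : Equiv.Perm (Fin 4)) 0 = 0 by decide]
        linear_combination h02
      · rw [show (Equiv.swap 1 2 : Equiv.Perm (Fin 4)) 3 = 3 by decide,
          show (Equiv.swap 1 2 : Equiv.Perm (Fin 4)) 2 = 1 by decide]
        linear_combination hsum - h02
  · refine ⟨Equiv.swap 2 3 * Equiv.swap 1 2, ?_, ?_⟩
    · rw [show (Equiv.swap 2 3 * Equiv.swap 1 2 : Equiv.Perm (Fin 4)) 1 = 3 by decide,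
        show (Equiv.swap 2 3 * Equiv.swap 1 2 : Equiv.Perm (Fin 4)) 0 = 0 by decide]
      linear_combination h03
    · rw [show (Equiv.swap 2 3 * Equiv.swap 1 2 : Equiv.Perm (Fin 4)) 3 = 2 by decide,
        show (Equiv.swap 2 3 * Equiv.swap 1 2 : Equiv.Perm (Fin 4)) 2 = 1 by decide]
      linear_combination hsum - h03
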